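/- For real x ≥ 1 and real y, the complex Gamma function satisfies |Γ(x+iy)/Γ(x)| = ∏_{k=0}^{∞} (1 + y²/(x+k)²)^(−1/2). -/

import Mathlib

open Complex

open Filter Topology Finset in
private lemma aux_rpow_eq (y p : ℝ) (hp : 0 < p) :
    (1 + y ^ 2 / p ^ 2) ^ (-(1/2) : ℝ) = p / Real.sqrt (p ^ 2 + y ^ 2) := by
  have h1 : 1 + y ^ 2 / p ^ 2 = (p ^ 2 + y ^ 2) / p ^ 2 := by field_simp
  have h2 : (0:ℝ) ≤ (p ^ 2 + y ^ 2) / p ^ 2 := by positivity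
  rw [h1, Real.rpow_neg h2, ← Real.sqrt_eq_rpow,
    Real.sqrt_div (by positivity) _, Real.sqrt_sq hp.le, inv_div]

open Filter Topology Finset in
theorem gamma_ratio_prod (x y : ℝ) (hx : 1 ≤ x) :
    ‖Complex.Gamma (x + y * I) / Complex.Gamma (x)‖ =
      ∏' k : ℕ, (1 + y ^ 2 / (x + k) ^ 2) ^ (-(1/2) : ℝ) := by
  have hx0 : (0:ℝ) < x := lt_of_lt_of_le one_pos hx
  set s : ℂ := (x:ℂ) + y * I with hs
  set a : ℕ → ℝ := fun k => (1 + y ^ 2 / (x + k) ^ 2) ^ (-(1/2) : ℝ) with ha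
  have hp : ∀ k : ℕ, (0:ℝ) < x + k := fun k => by positivity
  have hapos : ∀ k, 0 < a k := fun k => Real.rpow_pos_of_pos (by positivity) _
  have hale : ∀ k, a k ≤ 1 := fun k =>
    Real.rpow_le_one_of_one_le_of_nonpos (le_add_of_nonneg_right (by positivity)) (by norm_num)
  have hsre : s.re = x := by simp [hs]
  have hGs : Complex.Gamma s ≠ 0 := by
    apply Complex.Gamma_ne_zero
    intro m hm
    have : x = -(m : ℝ) := by
      have := congrArg Complex.re hm
      simpa [hsre] using this
    have hm0 : (0:ℝ) ≤ (m : ℝ) := Nat.cast_nonneg m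
    linarith
  have hGx : Complex.Gamma (x : ℂ) ≠ 0 := by
    apply Complex.Gamma_ne_zero
    intro m hm
    have : x = -(m : ℝ) := by
      have := congrArg Complex.re hm
      simpa using this
    have hm0 : (0:ℝ) ≤ (m : ℝ) := Nat.cast_nonneg m
    linarith
  set L : ℝ := ‖Complex.Gamma s / Complex.Gamma (x:ℂ)‖ with hLdef
  have hL : 0 < L := by
    rw [hLdef, norm_div]
    exact div_pos (norm_pos_iff.mpr hGs) (norm_pos_iff.mpr hGx)
  -- the limit of the abs of the ratio of Gamma sequences
  have hT : Tendsto (fun n => ‖Complex.GammaSeq s n / Complex.GammaSeq (x:ℂ) n‖)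
      atTop (𝓝 L) :=
    (continuous_norm.continuousAt).tendsto.comp
      ((Complex.GammaSeq_tendsto_Gamma s).div (Complex.GammaSeq_tendsto_Gamma (x:ℂ)) hGx)
  -- key computation for n ≥ 1
  have key : ∀ n : ℕ, 1 ≤ n →
      ‖Complex.GammaSeq s n / Complex.GammaSeq (x:ℂ) n‖
        = ∏ j ∈ Finset.range (n+1), a j := by
    intro n hn
    have hn0 : (0:ℝ) < (n : ℝ) := by exact_mod_cast hn
    have h1 : ‖(n:ℂ) ^ s‖ = (n:ℝ) ^ x := by
      rw [show ((n:ℂ)) = (((n:ℝ)):ℂ) by push_cast; ring,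
        Complex.norm_cpow_eq_rpow_re_of_pos hn0, hsre]
    have h2 : ‖(n:ℂ) ^ (x:ℂ)‖ = (n:ℝ) ^ x := by
      rw [show ((n:ℂ)) = (((n:ℝ)):ℂ) by push_cast; ring,
        Complex.norm_cpow_eq_rpow_re_of_pos hn0]
      simp
    have e1 : ∀ j ∈ Finset.range (n+1),
        ‖s + (j:ℕ)‖ = Real.sqrt ((x + j) ^ 2 + y ^ 2) := by
      intro j _
      have : s + (j:ℕ) = ((x + j : ℝ) : ℂ) + (y:ℝ) * I := by
        rw [hs]; push_cast; ring
      rw [this, Complex.norm_add_mul_I]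
    have e2 : ∀ j ∈ Finset.range (n+1),
        ‖(x:ℂ) + (j:ℕ)‖ = x + j := by
      intro j _
      have : ((x:ℂ) + (j:ℕ)) = ((x + j : ℝ) : ℂ) := by push_cast; ring
      rw [this, Complex.norm_real, Real.norm_eq_abs, abs_of_pos (hp j)]
    simp only [Complex.GammaSeq, norm_div, norm_mul, norm_prod]
    rw [Finset.prod_congr rfl e1, Finset.prod_congr rfl e2, h1, h2, Complex.norm_natCast]
    have ea : ∀ j ∈ Finset.range (n+1), a j = (x + j) / Real.sqrt ((x + j) ^ 2 + y ^ 2) :=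
      fun j _ => aux_rpow_eq y (x + j) (hp j)
    rw [Finset.prod_congr rfl ea, Finset.prod_div_distrib]
    have hA : (0:ℝ) < (n:ℝ) ^ x * (Nat.factorial n : ℝ) := by positivity
    have hP1 : (0:ℝ) < ∏ j ∈ Finset.range (n+1), Real.sqrt ((x + j) ^ 2 + y ^ 2) :=
      Finset.prod_pos fun j _ => Real.sqrt_pos.2 (by positivity)
    have hP2 : (0:ℝ) < ∏ j ∈ Finset.range (n+1), (x + j) :=
      Finset.prod_pos fun j _ => hp j
    field_simp
  -- hence the partial products tend to L
  have hT2 : Tendsto (fun n => ∏ j ∈ Finset.range (n+1), a j) atTop (𝓝 L) := by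
    apply hT.congr'
    filter_upwards [eventually_ge_atTop 1] with n hn
    exact key n hn
  have hT3 : Tendsto (fun n => ∏ j ∈ Finset.range n, a j) atTop (𝓝 L) := by
    rw [← tendsto_add_atTop_iff_nat 1]
    exact hT2
  -- pass to logarithms
  have hlog : Tendsto (fun n => ∑ j ∈ Finset.range n, Real.log (a j)) atTop
      (𝓝 (Real.log L)) := by
    have := (Real.continuousAt_log hL.ne').tendsto.comp hT3
    exact this.congr fun n => Real.log_prod fun j _ => (hapos j).ne'
  have hneg : HasSum (fun j => -Real.log (a j)) (-Real.log L) := by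
    rw [hasSum_iff_tendsto_nat_of_nonneg]
    · simpa [Finset.sum_neg_distrib] using hlog.neg
    · intro i
      simpa using Real.log_nonpos (hapos i).le (hale i)
  have hsum : HasSum (fun j => Real.log (a j)) (Real.log L) := by
    simpa using hneg.neg
  have hprod : HasProd a L := by
    have h := hsum.rexp
    have h2 : (Real.exp ∘ fun j => Real.log (a j)) = a :=
      funext fun j => Real.exp_log (hapos j)
    rwa [h2, Real.exp_log hL] at h
  exact hprod.tprod_eq.symm
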